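/- (Error bound for Level-set Orthogonal Descent Estimation.) Let E be a real inner product space, h : E → ℝ differentiable, φ : E × ℝ → ℝ, f̂ : E → ℝ, and constants c_N, L_z, L_e, σ, L_h, M, ℓ ≥ 0, c ∈ ℝ, K ∈ ℕ. Assume: (i) |f̂(x) − φ(x, h(x))| ≤ c_N for all x ∈ E (bounded outcome-model error); (ii) x ↦ φ(x, c) is differentiable with ⟪∇ₓφ(x, c), ∇h(x)⟫ = 0 for all x, and |φ(y, c) − φ(x, c) − ⟪∇ₓφ(x, c), y − x⟫| ≤ (σ/2)‖y − x‖² for all x, y (Hessian bound σ); (iii) ‖∇h(x)‖ ≤ L_h for all x; (iv) let t₀, …, t_K be the Euler iterates t_{i+1} = t_i − 2ℓ(h(t_i) − c) • ∇h(t_i), with (h(t_i) − c)² ≤ M for all i < K; (v) z ↦ φ(t_K, z) is L_z-Lipschitz; (vi) x ↦ φ(x, h(x)) is L_e-Lipschitz; and (vii) there exists a true surrogate t' ∈ E with h(t') = c and φ(t', c) = φ(t₀, c). Then the conditional-effect estimation error satisfies |f̂(t_K) − φ(t₀, c)| ≤ c_N + min( L_e·‖t' − t_K‖ , 2·K·ℓ²·M·σ·L_h²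 + L_z·|h(t_K) − c| ). -/

import Mathlib

open scoped RealInnerProductSpace

/-- Error bound for Level-set Orthogonal Descent Estimation: the conditional-effect
estimation error of the estimate `f̂(t_K)` at the surrogate obtained by `K` Euler steps
is bounded by the outcome-model error `c_N` plus the minimum of a direct Lipschitz
bound and the accumulated-Euler-error plus confounder-mismatch bound. -/
theorem lode_error_bound
    {E : Type*} [NormedAddCommGroup E] [InnerProductSpace ℝ E] [CompleteSpace E]
    (h : E → ℝ) (gh : E → E)
    (hgrad_h : ∀ x, HasGradientAt h (gh x) x)
    (φ : E → ℝ → ℝ) (fhat : E → ℝ)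
    (cN Lz Le σ Lh M ℓ : ℝ)
    (hcN : 0 ≤ cN) (hLz : 0 ≤ Lz) (hLe : 0 ≤ Le) (hσ : 0 ≤ σ)
    (hLh : 0 ≤ Lh) (hM : 0 ≤ M) (hℓ : 0 ≤ ℓ)
    (c : ℝ) (K : ℕ)
    -- (i) bounded outcome-model error
    (herr : ∀ x, |fhat x - φ x (h x)| ≤ cN)
    -- (ii) C-red orthogonality and Hessian (second-order Taylor) bound at confounder value c
    (gφ : E → E)
    (hgrad_φ : ∀ x, HasGradientAt (fun y => φ y c) (gφ x) x)
    (horth : ∀ x, ⟪gφ x, gh x⟫ = 0)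
    (htaylor : ∀ x y, |φ y c - φ x c - ⟪gφ x, y - x⟫| ≤ σ / 2 * ‖y - x‖ ^ 2)
    -- (iii) bounded gradient of h
    (hgh_bound : ∀ x, ‖gh x‖ ≤ Lh)
    -- (iv) Euler iterates with bounded confounder mismatch
    (t : ℕ → E)
    (hiter : ∀ i < K, t (i + 1) = t i - (2 * ℓ * (h (t i) - c)) • gh (t i))
    (hmismatch : ∀ i < K, (h (t i) - c) ^ 2 ≤ M)
    -- (v) Lipschitzness of φ(t_K, ·) in the confounder value
    (hLipz : ∀ z₁ z₂ : ℝ, |φ (t K) z₁ - φ (t K) z₂| ≤ Lz * |z₁ - z₂|)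
    -- (vi) Lipschitzness of the regression function x ↦ φ(x, h x)
    (hLipe : ∀ x y : E, |φ x (h x) - φ y (h y)| ≤ Le * ‖x - y‖)
    -- (vii) existence of a true surrogate
    (t' : E) (ht'conf : h t' = c) (ht'eff : φ t' c = φ (t 0) c) :
    |fhat (t K) - φ (t 0) c| ≤
      cN + min (Le * ‖t' - t K‖)
        (2 * K * ℓ ^ 2 * M * σ * Lh ^ 2 + Lz * |h (t K) - c|) := by

  set B : ℝ := 2 * ℓ ^ 2 * M * σ * Lh ^ 2 with hB
  have hBnn : 0 ≤ B := by positivity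
  have key : ∀ i ≤ K, |φ (t i) c - φ (t 0) c| ≤ i * B := by
    intro i hi
    induction i with
    | zero => simp
    | succ n ih =>
      have hnK : n < K := hi
      have hn : |φ (t n) c - φ (t 0) c| ≤ n * B := ih (le_of_lt hnK)
      have hstep : |φ (t (n + 1)) c - φ (t n) c| ≤ B := by
        have hdiff : t (n + 1) - t n = -((2 * ℓ * (h (t n) - c)) • gh (t n)) := by
          rw [hiter n hnK]; abel
        have hinner : ⟪gφ (t n), t (n + 1) - t n⟫ = 0 := by
          rw [hdiff, inner_neg_right, real_inner_smul_right, horth]; ring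
        have htay := htaylor (t n) (t (n + 1))
        rw [hinner, sub_zero] at htay
        refine htay.trans ?_
        have hnorm : ‖t (n + 1) - t n‖ = |2 * ℓ * (h (t n) - c)| * ‖gh (t n)‖ := by
          rw [hdiff, norm_neg, norm_smul, Real.norm_eq_abs]
        have h1 : ‖t (n + 1) - t n‖ ^ 2 ≤ 4 * ℓ ^ 2 * M * Lh ^ 2 := by
          rw [hnorm, mul_pow, sq_abs]
          have h3 : ‖gh (t n)‖ ^ 2 ≤ Lh ^ 2 :=
            pow_le_pow_left₀ (norm_nonneg _) (hgh_bound _) 2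
          have h4 : (h (t n) - c) ^ 2 ≤ M := hmismatch n hnK
          nlinarith [mul_le_mul h4 h3 (sq_nonneg (‖gh (t n)‖)) hM, sq_nonneg ℓ, mul_nonneg (sq_nonneg ℓ) (mul_nonneg hM (sq_nonneg Lh))]
        calc σ / 2 * ‖t (n + 1) - t n‖ ^ 2
            ≤ σ / 2 * (4 * ℓ ^ 2 * M * Lh ^ 2) :=
              mul_le_mul_of_nonneg_left h1 (by positivity)
          _ = B := by rw [hB]; ring
      calc |φ (t (n + 1)) c - φ (t 0) c|
          ≤ |φ (t (n + 1)) c - φ (t n) c| + |φ (t n) c - φ (t 0) c| := abs_sub_le _ _ _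
        _ ≤ B + n * B := add_le_add hstep hn
        _ = (n + 1 : ℕ) * B := by push_cast; ring
  have hA : |φ (t K) (h (t K)) - φ (t 0) c| ≤ Le * ‖t' - t K‖ := by
    have : φ (t 0) c = φ t' (h t') := by rw [ht'conf, ht'eff]
    rw [this]
    calc |φ (t K) (h (t K)) - φ t' (h t')| ≤ Le * ‖t K - t'‖ := hLipe _ _
      _ = Le * ‖t' - t K‖ := by rw [norm_sub_rev]
  have hBnd : |φ (t K) (h (t K)) - φ (t 0) c| ≤
      2 * K * ℓ ^ 2 * M * σ * Lh ^ 2 + Lz * |h (t K) - c| := by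
    calc |φ (t K) (h (t K)) - φ (t 0) c|
        ≤ |φ (t K) (h (t K)) - φ (t K) c| + |φ (t K) c - φ (t 0) c| := abs_sub_le _ _ _
      _ ≤ Lz * |h (t K) - c| + K * B := add_le_add (hLipz _ _) (key K le_rfl)
      _ = 2 * K * ℓ ^ 2 * M * σ * Lh ^ 2 + Lz * |h (t K) - c| := by rw [hB]; ring
  have hmain : |fhat (t K) - φ (t 0) c| ≤ cN + |φ (t K) (h (t K)) - φ (t 0) c| :=
    (abs_sub_le _ _ _).trans (add_le_add_left (herr _) _)
  refine hmain.trans (add_le_add_right (le_min hA hBnd) cN)
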